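/- Let d be a positive natural number and work in E = ℝ^d. Let K be a finite index set with weights w_k ≥ 0 summing to 1. For each k ∈ K, let F_k : E → ℝ be twice continuously differentiable and μ-strongly convex with L-Lipschitz gradient (L ≥ μ > 0), i.e., ‖∇F_k(x) − ∇F_k(y)‖ ≤ L·‖x − y‖ and F_k(x) − F_k(y) ≥ ⟨∇F_k(y), x − y⟩ + (μ/2)·‖x − y‖² for all x, y. Assume each F_k attains its minimum at a point θ_k* with ‖θ_k*‖ ≤ Λ_k for some Λ_k > 0. If θ* ∈ E satisfies ∑_{k∈K} w_k ∇F_k(θ*) = 0 (i.e., θ* is the minimizer of the weighted sum ∑_{k∈K} w_k F_k), then ‖θ*‖ ≤ (max_{k∈K} Λ_k)·L/μ. -/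
import Mathlib


open Finset RealInnerProductSpace

theorem global_optimizer_bound
    (d : ℕ) (hd : 0 < d)
    (ι : Type*) [Fintype ι] [Nonempty ι]
    (w : ι → ℝ) (hw : ∀ k, 0 ≤ w k) (hw1 : ∑ k, w k = 1)
    (F : ι → EuclideanSpace ℝ (Fin d) → ℝ)
    (gradF : ι → EuclideanSpace ℝ (Fin d) → EuclideanSpace ℝ (Fin d))
    (hC2 : ∀ k, ContDiff ℝ 2 (F k))
    (hdiff : ∀ k x, HasGradientAt (F k) (gradF k x) x)
    (L μ : ℝ) (hμ : 0 < μ) (hLμ : μ ≤ L)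
    (hlip : ∀ k, ∀ x y : EuclideanSpace ℝ (Fin d),
      ‖gradF k x - gradF k y‖ ≤ L * ‖x - y‖)
    (hstrong : ∀ k, ∀ x y : EuclideanSpace ℝ (Fin d),
      F k x - F k y ≥ ⟪gradF k y, x - y⟫ + (μ / 2) * ‖x - y‖ ^ 2)
    (θmin : ι → EuclideanSpace ℝ (Fin d))
    (hminle : ∀ k, ∀ x, F k (θmin k) ≤ F k x)
    (Λ : ι → ℝ) (hΛpos : ∀ k, 0 < Λ k) (hΛ : ∀ k, ‖θmin k‖ ≤ Λ k)
    (θstar : EuclideanSpace ℝ (Fin d))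
    (hcrit : ∑ k, w k • gradF k θstar = 0) :
    ‖θstar‖ ≤ (Finset.univ.sup' Finset.univ_nonempty Λ) * L / μ := by
  set Λ' := Finset.univ.sup' Finset.univ_nonempty Λ with hΛ'def
  have hΛ'pos : 0 < Λ' := by
    obtain ⟨k⟩ := ‹Nonempty ι›
    exact lt_of_lt_of_le (hΛpos k) (Finset.le_sup' Λ (Finset.mem_univ k))
  -- gradient vanishes at each local minimizer
  have hgrad0 : ∀ k, gradF k (θmin k) = 0 := by
    intro k
    have hmin : IsLocalMin (F k) (θmin k) :=
      Filter.Eventually.of_forall (fun x => hminle k x)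
    have h0 := hmin.hasFDerivAt_eq_zero (hdiff k (θmin k)).hasFDerivAt
    have := (InnerProductSpace.toDual ℝ (EuclideanSpace ℝ (Fin d))).injective
      (by simpa using h0)
    simpa using this
  -- strong monotonicity
  have hmono : ∀ k x y, μ * ‖x - y‖ ^ 2 ≤ ⟪gradF k x - gradF k y, x - y⟫ := by
    intro k x y
    have h1 := hstrong k x y
    have h2 := hstrong k y x
    have e1 : ⟪gradF k x, y - x⟫ = -⟪gradF k x, x - y⟫ := by
      rw [← inner_neg_right, neg_sub]
    have e2 : ‖y - x‖ = ‖x - y‖ := norm_sub_rev _ _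
    rw [e1, e2] at h2
    rw [inner_sub_left]
    nlinarith [h1, h2]
  -- bound on ‖gradF k 0‖
  have hg0 : ∀ k, ‖gradF k 0‖ ≤ L * Λ' := by
    intro k
    have h1 : ‖gradF k 0 - gradF k (θmin k)‖ ≤ L * ‖(0 : EuclideanSpace ℝ (Fin d)) - θmin k‖ :=
      hlip k 0 (θmin k)
    rw [hgrad0 k, sub_zero] at h1
    have h2 : ‖(0 : EuclideanSpace ℝ (Fin d)) - θmin k‖ = ‖θmin k‖ := by
      rw [zero_sub, norm_neg]
    rw [h2] at h1
    calc ‖gradF k 0‖ ≤ L * ‖θmin k‖ := h1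
      _ ≤ L * Λ' := by
          apply mul_le_mul_of_nonneg_left _ (le_trans hμ.le hLμ)
          exact le_trans (hΛ k) (Finset.le_sup' Λ (Finset.mem_univ k))
  -- key inequality: μ ‖θstar‖² ≤ L Λ' ‖θstar‖
  have hsum0 : ∑ k, w k * ⟪gradF k θstar, θstar⟫ = 0 := by
    have : ⟪∑ k, w k • gradF k θstar, θstar⟫ = (0 : ℝ) := by
      rw [hcrit, inner_zero_left]
    rw [sum_inner] at this
    simp_rw [real_inner_smul_left] at this
    exact this
  have key : μ * ‖θstar‖ ^ 2 ≤ L * Λ' * ‖θstar‖ := by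
    have h1 : μ * ‖θstar‖ ^ 2 = ∑ k, w k * (μ * ‖θstar‖ ^ 2) := by
      rw [← Finset.sum_mul, hw1, one_mul]
    have h2 : ∀ k ∈ Finset.univ, w k * (μ * ‖θstar‖ ^ 2)
        ≤ w k * ⟪gradF k θstar - gradF k 0, θstar⟫ := by
      intro k _
      apply mul_le_mul_of_nonneg_left _ (hw k)
      have := hmono k θstar 0
      simpa using this
    have h3 : ∑ k, w k * ⟪gradF k θstar - gradF k 0, θstar⟫
        = - ∑ k, w k * ⟪gradF k 0, θstar⟫ := by
      simp_rw [inner_sub_left, mul_sub]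
      rw [Finset.sum_sub_distrib, hsum0, zero_sub]
    have h4 : - ∑ k, w k * ⟪gradF k 0, θstar⟫ ≤ ∑ k, w k * (L * Λ' * ‖θstar‖) := by
      rw [← Finset.sum_neg_distrib]
      apply Finset.sum_le_sum
      intro k _
      have hcs : |⟪gradF k 0, θstar⟫| ≤ ‖gradF k 0‖ * ‖θstar‖ :=
        abs_real_inner_le_norm _ _
      have h5 : ‖gradF k 0‖ * ‖θstar‖ ≤ L * Λ' * ‖θstar‖ :=
        mul_le_mul_of_nonneg_right (hg0 k) (norm_nonneg _)
      have hb : -⟪gradF k 0, θstar⟫ ≤ L * Λ' * ‖θstar‖ := by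
        have := neg_abs_le ⟪gradF k 0, θstar⟫
        linarith
      calc -(w k * ⟪gradF k 0, θstar⟫) = w k * (-⟪gradF k 0, θstar⟫) := by ring
        _ ≤ w k * (L * Λ' * ‖θstar‖) := mul_le_mul_of_nonneg_left hb (hw k)
    have h6 : ∑ k, w k * (L * Λ' * ‖θstar‖) = L * Λ' * ‖θstar‖ := by
      rw [← Finset.sum_mul, hw1, one_mul]
    calc μ * ‖θstar‖ ^ 2 = ∑ k, w k * (μ * ‖θstar‖ ^ 2) := h1
      _ ≤ ∑ k, w k * ⟪gradF k θstar - gradF k 0, θstar⟫ := Finset.sum_le_sum h2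
      _ = - ∑ k, w k * ⟪gradF k 0, θstar⟫ := h3
      _ ≤ ∑ k, w k * (L * Λ' * ‖θstar‖) := h4
      _ = L * Λ' * ‖θstar‖ := h6
  -- conclude
  rcases eq_or_lt_of_le (norm_nonneg θstar) with h | h
  · rw [← h]
    exact div_nonneg (mul_nonneg hΛ'pos.le (hμ.le.trans hLμ)) hμ.le
  · have : μ * ‖θstar‖ ≤ L * Λ' := by
      have := key
      nlinarith
    rw [le_div_iff₀ hμ]
    nlinarith
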